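/- (Counting S-integer vectors of prescribed norms) Let T = (T_p)_{p∈S} with T_∞ = ℓ_∞ p₁^{ℓ₁}⋯p_s^{ℓ_s} where ℓ_∞ ∈ ℕ_S and ℓ_i ∈ ℤ, and T_{p_i} = p_i^{k_i} with k_i ∈ ℤ for 1 ≤ i ≤ s. Then: (i) if the set {q ∈ ℤ_S^n : ‖q‖_p = T_p for all p ∈ S} is nonempty, then ℓ_i ≥ −k_i for all 1 ≤ i ≤ s; (ii) the cardinality of this set is at most 2n(2∏_{p∈S} T_p + 1)^{n−1}. -/

import Mathlib

open MeasureTheory Matrix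

noncomputable section

/-- `z` belongs to the ring of `S`-integers `ℤ_S = ℤ[1/P]`,
where `P` is the product of the finite primes in `S`. -/
def IsZS (P : ℕ) (z : ℚ) : Prop := ∃ (a : ℤ) (k : ℕ), z = (a : ℚ) / (P : ℚ) ^ k

/-- A collection of approximating functions `ψ = (ψ_p)_{p ∈ S}`:
each `ψ_p : ℝ_{>0} → ℝ_{>0}` is non-increasing and `≡ 1` on `(0,1]`
(we extend by `1` on `t ≤ 1`); moreover for each finite place `p`,
`ψ_p` is constant on `{p^{kn}, …, p^{kn+n-1}}` for every `k ∈ ℤ` and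
takes values in `p^{mℤ}` on `p^ℤ`. -/
structure ApproxFamily (m n s : ℕ) (p : Fin s → ℕ) : Type where
  psiR : ℝ → ℝ
  psiP : Fin s → ℝ → ℝ
  posR : ∀ t, 0 < psiR t
  antiR : ∀ ⦃t₁ t₂ : ℝ⦄, 0 < t₁ → t₁ ≤ t₂ → psiR t₂ ≤ psiR t₁
  oneR : ∀ ⦃t : ℝ⦄, t ≤ 1 → psiR t = 1
  posP : ∀ i t, 0 < psiP i t
  antiP : ∀ i ⦃t₁ t₂ : ℝ⦄, 0 < t₁ → t₁ ≤ t₂ → psiP i t₂ ≤ psiP i t₁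
  oneP : ∀ i ⦃t : ℝ⦄, t ≤ 1 → psiP i t = 1
  constP : ∀ i (k : ℤ) (j : ℕ), j < n →
    psiP i ((p i : ℝ) ^ (k * n + j : ℤ)) = psiP i ((p i : ℝ) ^ (k * n : ℤ))
  valsP : ∀ i (k : ℤ), ∃ l : ℤ, psiP i ((p i : ℝ) ^ k) = (p i : ℝ) ^ (m * l : ℤ)

/-- The real components of the diagonal embedding of a rational vector. -/
def ratR {k : ℕ} (q : Fin k → ℚ) : Fin k → ℝ := fun j => (q j : ℝ)

/-- The `p i`-adic components of the diagonal embedding of a rational vector. -/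
def ratP {s : ℕ} (p : Fin s → ℕ) [∀ i, Fact (p i).Prime] {k : ℕ} (i : Fin s)
    (q : Fin k → ℚ) : Fin k → ℚ_[p i] := fun j => (q j : ℚ_[p i])

/-- The region `E_f(T) ⊆ ℚ_S^m × ℚ_S^n` cut out by `‖x‖_p^m ≤ f_p(‖y‖_p^n)` and
`‖y‖_p^n ≤ T_p` for all `p ∈ S` (product coordinates). -/
def Eprod (m n : ℕ) {s : ℕ} (p : Fin s → ℕ) [∀ i, Fact (p i).Prime]
    (fR : ℝ → ℝ) (fP : Fin s → ℝ → ℝ) (TR : ℝ) (TP : Fin s → ℝ) :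
    Set (((Fin m → ℝ) × ∀ i, Fin m → ℚ_[p i]) × ((Fin n → ℝ) × ∀ i, Fin n → ℚ_[p i])) :=
  {xy | ‖xy.1.1‖ ^ m ≤ fR (‖xy.2.1‖ ^ n) ∧ ‖xy.2.1‖ ^ n ≤ TR ∧
      ∀ i, ‖xy.1.2 i‖ ^ m ≤ fP i (‖xy.2.2 i‖ ^ n) ∧ ‖xy.2.2 i‖ ^ n ≤ TP i}

/-- The region `E_f(T) ⊆ ℚ_S^{m+n}`, where the first `m` coordinates play the role of
`x` and the last `n` coordinates the role of `y`. -/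
def Efull (m n : ℕ) {s : ℕ} (p : Fin s → ℕ) [∀ i, Fact (p i).Prime]
    (fR : ℝ → ℝ) (fP : Fin s → ℝ → ℝ) (TR : ℝ) (TP : Fin s → ℝ) :
    Set ((Fin (m + n) → ℝ) × ∀ i, Fin (m + n) → ℚ_[p i]) :=
  {v | ‖fun a : Fin m => v.1 (Fin.castAdd n a)‖ ^ m
        ≤ fR (‖fun b : Fin n => v.1 (Fin.natAdd m b)‖ ^ n) ∧
      ‖fun b : Fin n => v.1 (Fin.natAdd m b)‖ ^ n ≤ TR ∧
      ∀ i, ‖fun a : Fin m => v.2 i (Fin.castAdd n a)‖ ^ m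
            ≤ fP i (‖fun b : Fin n => v.2 i (Fin.natAdd m b)‖ ^ n) ∧
          ‖fun b : Fin n => v.2 i (Fin.natAdd m b)‖ ^ n ≤ TP i}

/-- The operator norm of a real matrix acting on sup-normed spaces. -/
def opNorm {k l : ℕ} (M : Matrix (Fin k) (Fin l) ℝ) : ℝ :=
  ‖LinearMap.toContinuousLinearMap M.mulVecLin‖

/-- An element of the group `𝐇 = ∏_{p ∈ S} H_p` of block lower-triangular matrices,
given by its blocks at each place. -/
structure HElem (m n : ℕ) (s : ℕ) (p : Fin s → ℕ) [∀ i, Fact (p i).Prime] : Type where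
  aR : Matrix (Fin m) (Fin m) ℝ
  bR : Matrix (Fin n) (Fin m) ℝ
  cR : Matrix (Fin n) (Fin n) ℝ
  aP : ∀ i, Matrix (Fin m) (Fin m) ℚ_[p i]
  bP : ∀ i, Matrix (Fin n) (Fin m) ℚ_[p i]
  cP : ∀ i, Matrix (Fin n) (Fin n) ℚ_[p i]

/-- The action of an element of `𝐇` on `ℚ_S^m × ℚ_S^n`:
`h·(x, y) = (α x, β x + γ y)` at each place. -/
def HElem.act {m n s : ℕ} {p : Fin s → ℕ} [∀ i, Fact (p i).Prime] (h : HElem m n s p)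
    (xy : ((Fin m → ℝ) × ∀ i, Fin m → ℚ_[p i]) × ((Fin n → ℝ) × ∀ i, Fin n → ℚ_[p i])) :
    ((Fin m → ℝ) × ∀ i, Fin m → ℚ_[p i]) × ((Fin n → ℝ) × ∀ i, Fin n → ℚ_[p i]) :=
  ((h.aR.mulVec xy.1.1, fun i => (h.aP i).mulVec (xy.1.2 i)),
   (h.bR.mulVec xy.1.1 + h.cR.mulVec xy.2.1,
    fun i => (h.bP i).mulVec (xy.1.2 i) + (h.cP i).mulVec (xy.2.2 i)))

/-- Membership in `H̃_{∞,ε}`: operator norm bounds on the blocks. -/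
def inHtilde (m n : ℕ) (ε : ℝ) (α : Matrix (Fin m) (Fin m) ℝ) (β : Matrix (Fin n) (Fin m) ℝ)
    (γ : Matrix (Fin n) (Fin n) ℝ) : Prop :=
  opNorm α ^ m ≤ 1 + ε ∧ opNorm γ ^ n ≤ 1 + ε / 2 ∧ opNorm β ≤ ε / (4 * n)

/-- `h ∈ (H̃_{∞,ε} ∩ H̃_{∞,ε}⁻¹) × ∏_{p ∈ S_f} H_p(ℤ_p)`. -/
def HElem.isAdmissible {m n s : ℕ} {p : Fin s → ℕ} [∀ i, Fact (p i).Prime]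
    (h : HElem m n s p) (ε : ℝ) : Prop :=
  IsUnit h.aR.det ∧ IsUnit h.cR.det ∧
  inHtilde m n ε h.aR h.bR h.cR ∧
  inHtilde m n ε h.aR⁻¹ (-(h.cR⁻¹ * h.bR * h.aR⁻¹)) h.cR⁻¹ ∧
  ∀ i, ((∀ a b, ‖h.aP i a b‖ ≤ 1) ∧ ‖(h.aP i).det‖ = 1) ∧
      ((∀ a b, ‖h.cP i a b‖ ≤ 1) ∧ ‖(h.cP i).det‖ = 1) ∧
      (∀ a b, ‖h.bP i a b‖ ≤ 1)

end


section AuxCounting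

open Finset

private lemma val_of_prime_prime' {pr q : ℕ} (hpr : pr.Prime) (hq : q.Prime) (hne : pr ≠ q) :
    padicValRat pr (q : ℚ) = 0 := by
  rw [padicValRat.of_nat]
  norm_cast
  exact padicValNat.eq_zero_of_not_dvd
    (fun h => hne ((Nat.prime_dvd_prime_iff_eq hpr hq).mp h))

private lemma val_zpow' (pr : ℕ) [Fact pr.Prime] {x : ℚ} (hx : x ≠ 0) (e : ℤ) :
    padicValRat pr (x ^ e) = e * padicValRat pr x := by
  cases e with
  | ofNat m =>
      rw [Int.ofNat_eq_coe, zpow_natCast, padicValRat.pow x]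
  | negSucc m =>
      rw [zpow_negSucc, padicValRat.inv, padicValRat.pow x]
      simp [Int.negSucc_eq]; ring

private lemma val_prod' (pr : ℕ) [Fact pr.Prime] {ι : Type*} (t : Finset ι) (f : ι → ℚ)
    (hf : ∀ i ∈ t, f i ≠ 0) :
    padicValRat pr (∏ i ∈ t, f i) = ∑ i ∈ t, padicValRat pr (f i) := by
  classical
  induction t using Finset.induction with
  | empty => simp [padicValRat.one]
  | @insert a t ha ih =>
      rw [Finset.prod_insert ha, Finset.sum_insert ha,
        padicValRat.mul (hf a (mem_insert_self a t))
          (Finset.prod_ne_zero_iff.mpr fun i hi => hf i (mem_insert_of_mem hi)),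
        ih fun i hi => hf i (mem_insert_of_mem hi)]

private lemma den_eq_one_of_val' {r : ℚ} (h : ∀ pr : ℕ, pr.Prime → 0 ≤ padicValRat pr r) :
    r.den = 1 := by
  by_contra hden
  obtain ⟨pr, hpr, hdvd⟩ := Nat.exists_prime_and_dvd hden
  haveI := Fact.mk hpr
  have h1 : 1 ≤ padicValNat pr r.den :=
    one_le_padicValNat_of_dvd r.pos.ne' hdvd
  have h2 : padicValInt pr r.num = 0 := by
    apply padicValInt.eq_zero_of_not_dvd
    intro hd
    have : pr ∣ r.num.natAbs := Int.natCast_dvd_natCast.mp (by simpa using (Int.dvd_natAbs.mpr hd))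
    have hcop : Nat.Coprime pr r.den := r.reduced.coprime_dvd_left this
    rw [Nat.Coprime, Nat.gcd_eq_left hdvd] at hcop
    exact hpr.one_lt.ne' hcop
  have h3 := h pr hpr
  rw [padicValRat] at h3
  omega

private lemma val_ge_of_padicNorm_le' {pr : ℕ} [hpr : Fact pr.Prime] {x : ℚ} (hx : x ≠ 0) {e : ℤ}
    (h : padicNorm pr x ≤ (pr : ℚ) ^ e) : -e ≤ padicValRat pr x := by
  rw [padicNorm.eq_zpow_of_nonzero hx] at h
  have h1 : (1:ℚ) < pr := by exact_mod_cast hpr.out.one_lt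
  have := (zpow_le_zpow_iff_right₀ h1).mp h
  omega

private lemma val_prod_pow_self' {s : ℕ} {p : Fin s → ℕ} [∀ i, Fact (p i).Prime]
    (hpinj : Function.Injective p) (e : Fin s → ℤ) (i₀ : Fin s) :
    padicValRat (p i₀) (∏ i, (p i : ℚ) ^ (e i)) = e i₀ := by
  have hppr : ∀ i, (p i).Prime := fun i => Fact.out
  have hpne : ∀ i, (p i : ℚ) ≠ 0 := fun i => Nat.cast_ne_zero.mpr (hppr i).pos.ne'
  rw [val_prod' _ _ _ (fun i _ => zpow_ne_zero _ (hpne i)), Finset.sum_eq_single i₀]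
  · rw [val_zpow' _ (hpne i₀), padicValRat.self (hppr i₀).one_lt, mul_one]
  · intro i _ hne
    rw [val_zpow' _ (hpne i),
      val_of_prime_prime' (hppr i₀) (hppr i) (fun h => hne (hpinj h.symm)), mul_zero]
  · simp

private lemma mem_int_scaled' {s : ℕ} {p : Fin s → ℕ} [∀ i, Fact (p i).Prime]
    (hpinj : Function.Injective p) (k : Fin s → ℤ) {x : ℚ}
    (hx : IsZS (∏ i, p i) x)
    (hnorm : ∀ i, padicNorm (p i) x ≤ (p i : ℚ) ^ (k i)) :
    (x * ∏ i, (p i : ℚ) ^ (k i)).den = 1 := by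
  rcases eq_or_ne x 0 with rfl | hx0
  · simp
  have hppr : ∀ i, (p i).Prime := fun i => Fact.out
  have hpne : ∀ i, (p i : ℚ) ≠ 0 := fun i => Nat.cast_ne_zero.mpr (hppr i).pos.ne'
  have hNne : (∏ i, (p i : ℚ) ^ (k i)) ≠ 0 :=
    Finset.prod_ne_zero_iff.mpr fun i _ => zpow_ne_zero _ (hpne i)
  apply den_eq_one_of_val'
  intro pr hpr
  haveI := Fact.mk hpr
  rw [padicValRat.mul hx0 hNne]
  by_cases hmem : ∃ i, p i = pr
  · obtain ⟨i₀, rfl⟩ := hmem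
    rw [val_prod_pow_self' hpinj k i₀]
    have := val_ge_of_padicNorm_le' hx0 (hnorm i₀)
    omega
  · push_neg at hmem
    have hsum : padicValRat pr (∏ i, (p i : ℚ) ^ (k i)) = 0 := by
      rw [val_prod' _ _ _ (fun i _ => zpow_ne_zero _ (hpne i))]
      apply Finset.sum_eq_zero
      intro i _
      rw [val_zpow' _ (hpne i),
        val_of_prime_prime' hpr (hppr i) (fun h => hmem i h.symm), mul_zero]
    rw [hsum, add_zero]
    obtain ⟨a, κ, rfl⟩ := hx
    have hP : (0:ℚ) < (∏ i, p i : ℕ) := by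
      exact_mod_cast Finset.prod_pos fun i _ => (hppr i).pos
    have hPκ : ((∏ i, p i : ℕ) : ℚ) ^ κ ≠ 0 := pow_ne_zero _ hP.ne'
    have ha : (a : ℚ) ≠ 0 := fun h => hx0 (by simp [h])
    rw [padicValRat.div ha hPκ, padicValRat.pow _]
    have hvP : padicValRat pr ((∏ i, p i : ℕ) : ℚ) = 0 := by
      rw [Nat.cast_prod, val_prod' pr _ _ (fun i _ => hpne i)]
      exact Finset.sum_eq_zero fun i _ =>
        val_of_prime_prime' hpr (hppr i) (fun h => hmem i h.symm)
    rw [hvP, mul_zero, sub_zero, padicValRat.of_int]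
    exact_mod_cast Nat.zero_le _

end AuxCounting

/-- **Counting S-integer vectors of prescribed norms.**
Let `T_∞ = ℓ_∞ p₁^{ℓ₁} ⋯ p_s^{ℓ_s}` (`ℓ_∞ ∈ ℕ_S`, `ℓ_i ∈ ℤ`) and `T_{p_i} = p_i^{k_i}`.
Then (i) if `{q ∈ ℤ_S^n : ‖q‖_p = T_p ∀ p}` is nonempty we have `ℓ_i ≥ −k_i` for all `i`;
(ii) its cardinality is at most `2n (2∏_p T_p + 1)^{n−1}`. -/
theorem count_S_integer_vectors_of_prescribed_norms
    (n : ℕ) (hn : 0 < n)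
    (s : ℕ) (p : Fin s → ℕ) [∀ i, Fact (p i).Prime] (hpinj : Function.Injective p)
    (linf : ℕ) (hlinf : 0 < linf) (hlinfS : Nat.Coprime linf (∏ i, p i))
    (l : Fin s → ℤ) (k : Fin s → ℤ)
    (TR : ℝ) (hTR : TR = (linf : ℝ) * ∏ i, (p i : ℝ) ^ (l i)) :
    ({q : Fin n → ℚ | (∀ j, IsZS (∏ i, p i) (q j)) ∧ ‖ratR q‖ = TR ∧
        ∀ i, ‖ratP p i q‖ = (p i : ℝ) ^ (k i)}.Nonempty →
      ∀ i, -(k i) ≤ l i) ∧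
    (({q : Fin n → ℚ | (∀ j, IsZS (∏ i, p i) (q j)) ∧ ‖ratR q‖ = TR ∧
        ∀ i, ‖ratP p i q‖ = (p i : ℝ) ^ (k i)}.ncard : ℝ)
      ≤ 2 * n * (2 * (TR * ∏ i, (p i : ℝ) ^ (k i)) + 1) ^ (n - 1)) := by
  classical
  have hppr : ∀ i, (p i).Prime := fun i => Fact.out
  have hpposQ : ∀ i, (0:ℚ) < p i := fun i => by exact_mod_cast (hppr i).pos
  set Nq : ℚ := ∏ i, (p i : ℚ) ^ (k i) with hNq
  set TR' : ℚ := (linf : ℚ) * ∏ i, (p i : ℚ) ^ (l i) with hTR'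
  have hNpos : 0 < Nq := Finset.prod_pos fun i _ => zpow_pos (hpposQ i) _
  have hTR'pos : 0 < TR' := mul_pos (by exact_mod_cast hlinf)
    (Finset.prod_pos fun i _ => zpow_pos (hpposQ i) _)
  have hcast : ((TR' : ℚ) : ℝ) = TR := by rw [hTR, hTR']; push_cast; ring
  have hNcast : ((Nq : ℚ) : ℝ) = ∏ i, (p i : ℝ) ^ (k i) := by rw [hNq]; push_cast; ring
  set A : Set (Fin n → ℚ) := {q : Fin n → ℚ | (∀ j, IsZS (∏ i, p i) (q j)) ∧ ‖ratR q‖ = TR ∧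
      ∀ i, ‖ratP p i q‖ = (p i : ℝ) ^ (k i)} with hA
  have hnormQ : ∀ q ∈ A, ∀ (i : Fin s) (j : Fin n),
      padicNorm (p i) (q j) ≤ (p i:ℚ) ^ (k i) := by
    intro q hq i j
    have h1 : ‖ratP p i q j‖ ≤ ‖ratP p i q‖ := norm_le_pi_norm _ j
    rw [hq.2.2 i] at h1
    rw [show ratP p i q j = ((q j : ℚ) : ℚ_[p i]) from rfl, Padic.eq_padicNorm] at h1
    have h2 : ((padicNorm (p i) (q j) : ℚ) : ℝ) ≤ (((p i:ℚ) ^ (k i) : ℚ) : ℝ) := by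
      push_cast; exact h1
    exact_mod_cast h2
  have habs : ∀ q ∈ A, ∀ j, |q j| ≤ TR' := by
    intro q hq j
    have h1 : ‖ratR q j‖ ≤ ‖ratR q‖ := norm_le_pi_norm _ j
    rw [hq.2.1, ← hcast] at h1
    rw [show ratR q j = ((q j : ℚ) : ℝ) from rfl, Real.norm_eq_abs] at h1
    exact_mod_cast h1
  have hext : ∀ q ∈ A, ∃ j, q j = TR' ∨ q j = -TR' := by
    intro q hq
    haveI : Nonempty (Fin n) := Fin.pos_iff_nonempty.mp hn
    obtain ⟨j, -, hj⟩ := Finset.exists_max_image Finset.univ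
      (fun j => |(q j : ℝ)|) Finset.univ_nonempty
    refine ⟨j, ?_⟩
    have h2 : ‖ratR q‖ ≤ |(q j : ℝ)| := by
      apply (pi_norm_le_iff_of_nonneg (abs_nonneg _)).mpr
      intro j'
      simpa [ratR, Real.norm_eq_abs, -Rat.norm_cast_real] using hj j' (Finset.mem_univ _)
    have h3 : |(q j : ℝ)| ≤ ‖ratR q‖ := by
      simpa [ratR, Real.norm_eq_abs, -Rat.norm_cast_real] using norm_le_pi_norm (ratR q) j
    have h4 : |q j| = TR' := by
      have h5 : |(q j:ℝ)| = ((TR' : ℚ) : ℝ) := by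
        rw [hcast, ← hq.2.1]; exact le_antisymm h3 h2
      exact_mod_cast h5
    rcases (abs_eq hTR'pos.le).mp h4 with h | h
    · exact Or.inl h
    · exact Or.inr h
  have part1 : A.Nonempty → ∀ i, -(k i) ≤ l i := by
    rintro ⟨q, hq⟩ i
    obtain ⟨j, hj⟩ := hext q hq
    have hle : padicNorm (p i) TR' ≤ (p i:ℚ) ^ (k i) := by
      rcases hj with h | h
      · rw [← h]; exact hnormQ q hq i j
      · rw [show TR' = -(q j) by rw [h]; ring, padicNorm.neg]; exact hnormQ q hq i j
    have hndvd : ¬ p i ∣ linf := by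
      intro hdvd
      have hcop : Nat.Coprime linf (p i) :=
        Nat.Coprime.coprime_dvd_right (Finset.dvd_prod_of_mem p (Finset.mem_univ i)) hlinfS
      have : p i ∣ Nat.gcd linf (p i) := Nat.dvd_gcd hdvd dvd_rfl
      rw [hcop] at this
      exact (hppr i).one_lt.ne' (Nat.dvd_one.mp this)
    have hval : padicValRat (p i) TR' = l i := by
      rw [hTR', padicValRat.mul (by exact_mod_cast hlinf.ne')
        (Finset.prod_ne_zero_iff.mpr fun i' _ => zpow_ne_zero _ (hpposQ i').ne'),
        val_prod_pow_self' hpinj l i]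
      have : padicValRat (p i) ((linf : ℕ) : ℚ) = 0 := by
        rw [padicValRat.of_nat, padicValNat.eq_zero_of_not_dvd hndvd, Nat.cast_zero]
      rw [this, zero_add]
    have := val_ge_of_padicNorm_le' hTR'pos.ne' hle
    rw [hval] at this
    omega
  refine ⟨part1, ?_⟩
  by_cases hAne : A.Nonempty
  · have hi := part1 hAne
    set C : ℕ := linf * ∏ i, (p i) ^ ((l i + k i).toNat) with hC
    have hCQ : (C : ℚ) = TR' * Nq := by
      rw [hTR', hNq, hC]
      push_cast
      rw [mul_assoc, ← Finset.prod_mul_distrib]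
      congr 1
      refine Finset.prod_congr rfl fun i _ => ?_
      rw [← zpow_natCast, Int.toNat_of_nonneg (by have := hi i; omega),
        zpow_add₀ (hpposQ i).ne']
    have hCR : (C : ℝ) = TR * ∏ i, (p i : ℝ) ^ (k i) := by
      rw [← hcast, ← hNcast, ← Rat.cast_mul, ← hCQ, Rat.cast_natCast]
    set D' : Finset ℚ := (Finset.Icc (-(C:ℤ)) (C:ℤ)).image (fun m : ℤ => (m : ℚ) / Nq)
      with hD'
    set F : Finset (Fin n → ℚ) :=
      (Fintype.piFinset fun _ : Fin n => D').filter (fun v => ∃ j, v j = TR' ∨ v j = -TR')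
      with hF
    have hsub : A ⊆ ↑F := by
      intro q hq
      rw [Finset.mem_coe, hF, Finset.mem_filter]
      refine ⟨Fintype.mem_piFinset.mpr fun j => ?_, hext q hq⟩
      have hden : (q j * Nq).den = 1 :=
        mem_int_scaled' hpinj k (hq.1 j) (fun i => hnormQ q hq i j)
      have hqm : ((q j * Nq).num : ℚ) = q j * Nq := by
        conv_rhs => rw [← Rat.num_div_den (q j * Nq)]
        rw [hden]; simp
      have hbound : |(q j * Nq).num| ≤ (C : ℤ) := by
        have h6 : |((q j * Nq).num : ℚ)| ≤ (C : ℚ) := by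
          rw [hqm, hCQ, abs_mul, abs_of_pos hNpos]
          exact mul_le_mul_of_nonneg_right (habs q hq j) hNpos.le
        exact_mod_cast h6
      rw [hD', Finset.mem_image]
      refine ⟨(q j * Nq).num, Finset.mem_Icc.mpr (abs_le.mp hbound), ?_⟩
      rw [hqm, mul_div_assoc, div_self hNpos.ne', mul_one]
    have h1 : (A.ncard : ℝ) ≤ (F.card : ℝ) := by
      have := Set.ncard_le_ncard hsub F.finite_toSet
      rw [Set.ncard_coe_finset] at this
      exact_mod_cast this
    have hDcard : D'.card ≤ 2 * C + 1 := by
      calc D'.card ≤ (Finset.Icc (-(C:ℤ)) (C:ℤ)).card := Finset.card_image_le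
      _ = 2 * C + 1 := by rw [Int.card_Icc]; omega
    have hcount : ∀ (j : Fin n) (c : ℚ),
        ((Fintype.piFinset fun _ : Fin n => D').filter (fun v => v j = c)).card
          ≤ D'.card ^ (n-1) := by
      intro j c
      have hsub2 : (Fintype.piFinset fun _ : Fin n => D').filter (fun v => v j = c) ⊆
          Fintype.piFinset (fun j' => if j' = j then ({c} : Finset ℚ) else D') := by
        intro v hv
        rw [Finset.mem_filter, Fintype.mem_piFinset] at hv
        rw [Fintype.mem_piFinset]
        intro j'
        by_cases h : j' = j
        · subst h; simp [hv.2]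
        · simp [h, hv.1 j']
      calc ((Fintype.piFinset fun _ : Fin n => D').filter (fun v => v j = c)).card
          ≤ (Fintype.piFinset (fun j' => if j' = j then ({c} : Finset ℚ) else D')).card :=
            Finset.card_le_card hsub2
      _ = ∏ j', (if j' = j then ({c} : Finset ℚ) else D').card := Fintype.card_piFinset _
      _ = (∏ j' ∈ Finset.univ.erase j, (if j' = j then ({c} : Finset ℚ) else D').card) *
            (if j = j then ({c} : Finset ℚ) else D').card :=
          (Finset.prod_erase_mul _ _ (Finset.mem_univ j)).symm
      _ = D'.card ^ (n - 1) := by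
          rw [if_pos rfl, Finset.card_singleton, mul_one,
            Finset.prod_congr rfl (fun j' hj' => by
              rw [if_neg (Finset.ne_of_mem_erase hj')]),
            Finset.prod_const, Finset.card_erase_of_mem (Finset.mem_univ j),
            Finset.card_univ, Fintype.card_fin]
    have hcard2 : F.card ≤ n * (2 * D'.card ^ (n-1)) := by
      have hFsub : F ⊆ Finset.univ.biUnion (fun j =>
          (Fintype.piFinset fun _ : Fin n => D').filter (fun v => v j = TR' ∨ v j = -TR')) := by
        intro v hv
        rw [hF, Finset.mem_filter] at hv
        obtain ⟨j, hj⟩ := hv.2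
        exact Finset.mem_biUnion.mpr ⟨j, Finset.mem_univ j, Finset.mem_filter.mpr ⟨hv.1, hj⟩⟩
      calc F.card ≤ _ := Finset.card_le_card hFsub
      _ ≤ ∑ j : Fin n, ((Fintype.piFinset fun _ : Fin n => D').filter
            (fun v => v j = TR' ∨ v j = -TR')).card := Finset.card_biUnion_le
      _ ≤ ∑ _j : Fin n, 2 * D'.card ^ (n-1) := by
          refine Finset.sum_le_sum fun j _ => ?_
          rw [Finset.filter_or]
          calc ((Fintype.piFinset fun _ : Fin n => D').filter (fun v => v j = TR') ∪
                (Fintype.piFinset fun _ : Fin n => D').filter (fun v => v j = -TR')).card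
              ≤ _ + _ := Finset.card_union_le _ _
          _ ≤ D'.card ^ (n-1) + D'.card ^ (n-1) := add_le_add (hcount j TR') (hcount j (-TR'))
          _ = 2 * D'.card ^ (n-1) := (two_mul _).symm
      _ = n * (2 * D'.card ^ (n-1)) := by
          rw [Finset.sum_const, Finset.card_univ, Fintype.card_fin, smul_eq_mul]
    calc (A.ncard : ℝ) ≤ (F.card : ℝ) := h1
    _ ≤ (n : ℝ) * (2 * (D'.card : ℝ) ^ (n-1)) := by exact_mod_cast hcard2
    _ ≤ (n : ℝ) * (2 * ((2 * C + 1 : ℕ) : ℝ) ^ (n-1)) := by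
        refine mul_le_mul_of_nonneg_left ?_ (Nat.cast_nonneg n)
        refine mul_le_mul_of_nonneg_left ?_ (by norm_num)
        exact pow_le_pow_left₀ (Nat.cast_nonneg _) (by exact_mod_cast hDcard) _
    _ = 2 * n * (2 * (TR * ∏ i, (p i:ℝ)^(k i)) + 1) ^ (n-1) := by
        rw [← hCR]; push_cast; ring
  · rw [Set.not_nonempty_iff_eq_empty] at hAne
    rw [hAne, Set.ncard_empty]
    have hTRpos : 0 < TR := by
      rw [hTR]
      apply mul_pos (by exact_mod_cast hlinf)
      exact Finset.prod_pos fun i _ => zpow_pos (by exact_mod_cast (hppr i).pos) _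
    have hBpos : 0 < TR * ∏ i, (p i:ℝ)^(k i) :=
      mul_pos hTRpos (Finset.prod_pos fun i _ => zpow_pos (by exact_mod_cast (hppr i).pos) _)
    have h2 : (0:ℝ) ≤ 2 * (TR * ∏ i, (p i:ℝ)^(k i)) + 1 := by linarith
    push_cast
    exact mul_nonneg (by positivity) (pow_nonneg h2 _)
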